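/- Let P be an ordered set of strings and let u ∈ Decomp_BWT(P). Then the set of symbols {BWT(P)[k] : k ∈ u} equals the set of symbols c ∈ Σ ∪ {$} such that the string Dec_Pre[u] followed by the single symbol c is a prefix of some string of the set {reverse(s) followed by $ : s ∈ P.S}. -/

import Mathlib

namespace BwtXbw

variable {α β : Type*}

/-- An ordered set of strings: a nonempty list of distinct nonempty strings over `α`
(the list order is the enumeration `t_1, …, t_n`). -/
structure OSS (α : Type*) where
  strs : List (List α)
  strs_ne : strs ≠ []
  nodup : strs.Nodup
  mem_ne : ∀ s ∈ strs, s ≠ []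

/-- Embed a symbol of `α` into `WithBot α`; `⊥` plays the role of the separator `$`,
which is smaller than every symbol of the alphabet. -/
def sym (a : α) : WithBot α := (a : WithBot α)

/-- The multi-string `m_P = t_1 $ t_2 $ ⋯ $ t_n $` over `WithBot α`. -/
def mP (P : OSS α) : List (WithBot α) :=
  (P.strs.map (fun s => s.map sym ++ [⊥])).flatten

/-- `SA` is a (0-based) suffix array for `m`: a bijection of `[0, |m|)` onto itself
listing the suffixes of `m` in increasing lexicographic order. -/
def IsSuffixArray [LinearOrder α] (m : List (WithBot α)) (SA : ℕ → ℕ) : Prop :=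
  Set.BijOn SA (Set.Iio m.length) (Set.Iio m.length) ∧
  ∀ i j : ℕ, i < j → j < m.length →
    List.Lex (· < ·) (m.drop (SA i)) (m.drop (SA j))

/-- `LRS(P)[i]` (0-based): number of symbols of `m` from position `SA i` up to (but not
including) the first separator at or after position `SA i`. -/
def lrs [LinearOrder α] (m : List (WithBot α)) (SA : ℕ → ℕ) (i : ℕ) : ℕ :=
  ((m.drop (SA i)).takeWhile (fun c => decide (c ≠ ⊥))).length

/-- Length of the longest common prefix of two lists. -/
def lcpLen [DecidableEq β] : List β → List β → ℕ
  | a :: s, b :: t => if a = b then lcpLen s t + 1 else 0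
  | _, _ => 0

/-- `LCP(P)[i] = min(LCP(m_P)[i], LRS(P)[i])` (0-based; `0` at `i = 0`). -/
def lcpP [LinearOrder α] (m : List (WithBot α)) (SA : ℕ → ℕ) (i : ℕ) : ℕ :=
  if i = 0 then 0
  else min (lcpLen (m.drop (SA (i - 1))) (m.drop (SA i))) (lrs m SA i)

/-- `Decomp_BWT(P)`: the maximal integer intervals `[u.1, u.2] ⊆ [0, |m|)` such that
`LCP(P)[k] = LRS(P)[k]` for every interior position `k ∈ [u.1+1, u.2]`. -/
def DecompBWT [LinearOrder α] (m : List (WithBot α)) (SA : ℕ → ℕ) : Set (ℕ × ℕ) :=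
  { u | u.1 ≤ u.2 ∧ u.2 < m.length ∧
        (∀ k, u.1 < k → k ≤ u.2 → lcpP m SA k = lrs m SA k) ∧
        (u.1 = 0 ∨ lcpP m SA u.1 ≠ lrs m SA u.1) ∧
        (u.2 + 1 = m.length ∨ lcpP m SA (u.2 + 1) ≠ lrs m SA (u.2 + 1)) }

/-- `Dec_Pre[u]`: the reverse of `m[SA u.1 .. SA u.1 + LRS[u.1] − 1]`. -/
def decPre [LinearOrder α] (m : List (WithBot α)) (SA : ℕ → ℕ) (u : ℕ × ℕ) :
    List (WithBot α) :=
  ((m.drop (SA u.1)).take (lrs m SA u.1)).reverse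

/-- `Prefix(←P.S)`: all prefixes (including the empty string) of the reversed strings of
`P.S`, viewed inside `WithBot α`. -/
def revPrefixes (P : OSS α) : Set (List (WithBot α)) :=
  { p | ∃ s ∈ P.strs, p <+: s.reverse.map sym }

/-- `Prefix(P.S)`: all prefixes (including the empty string) of the strings of `P.S`,
viewed inside `WithBot α`. -/
def fwdPrefixes (P : OSS α) : Set (List (WithBot α)) :=
  { p | ∃ s ∈ P.strs, p <+: s.map sym }

/-- `BWT(P)[i]` (0-based): `m[SA i − 1]` if `SA i > 0`, and the last symbol `$ = ⊥`
of `m` otherwise. -/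
def bwtArr (m : List (WithBot α)) (SA : ℕ → ℕ) (i : ℕ) : WithBot α :=
  if SA i = 0 then ⊥ else m.getD (SA i - 1) ⊥

/-- `C[c]`: the number of positions of `m` holding a symbol strictly smaller than `c`. -/
def Cfun [LinearOrder α] (m : List (WithBot α)) (c : WithBot α) : ℕ :=
  (m.filter (fun b => decide (b < c))).length

/-- The Last-to-First mapping (0-based):
`LF[i] = C[BWT[i]] + #{k < i : BWT[k] = BWT[i]}`. -/
def LF [LinearOrder α] (m : List (WithBot α)) (SA : ℕ → ℕ) (i : ℕ) : ℕ :=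
  Cfun m (bwtArr m SA i) +
    ((List.range i).filter (fun k => decide (bwtArr m SA k = bwtArr m SA i))).length

/-- The arc set `A_T(P)` on `Decomp_BWT(P)`. -/
def AT [LinearOrder α] (m : List (WithBot α)) (SA : ℕ → ℕ) :
    Set ((ℕ × ℕ) × (ℕ × ℕ)) :=
  { uv | uv.1 ∈ DecompBWT m SA ∧ uv.2 ∈ DecompBWT m SA ∧
      ∃ x, uv.1.1 ≤ x ∧ x ≤ uv.1.2 ∧ bwtArr m SA x ≠ ⊥ ∧
        uv.2.1 ≤ LF m SA x ∧ LF m SA x ≤ uv.2.2 }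

/-- Arc relation of the Aho–Corasick tree on the vertex set `Pref`:
`p` is the longest proper prefix of `q` belonging to `Pref`. -/
def ACTedge (Pref : Set (List β)) (p q : List β) : Prop :=
  p ∈ Pref ∧ q ∈ Pref ∧ p ≠ q ∧ p <+: q ∧
    ∀ r ∈ Pref, r ≠ q → r <+: q → r.length ≤ p.length

/-- `k` is a failure candidate for the position `i`: `k < i` and
`LRS[k] ≤ LCP[l]` for all `l ∈ [k+1, i]`. -/
def FailCand [LinearOrder α] (m : List (WithBot α)) (SA : ℕ → ℕ) (i k : ℕ) : Prop :=
  k < i ∧ ∀ l, k < l → l ≤ i → lrs m SA k ≤ lcpP m SA l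

/-- The arc set `A_F(P)` on `Decomp_BWT(P)`: the largest failure candidate for `u.1`
exists and lies in `v`. -/
def AF [LinearOrder α] (m : List (WithBot α)) (SA : ℕ → ℕ) :
    Set ((ℕ × ℕ) × (ℕ × ℕ)) :=
  { uv | uv.1 ∈ DecompBWT m SA ∧ uv.2 ∈ DecompBWT m SA ∧
      ∃ k, FailCand m SA uv.1.1 k ∧ (∀ k', FailCand m SA uv.1.1 k' → k' ≤ k) ∧
        uv.2.1 ≤ k ∧ k ≤ uv.2.2 }

/-- Arc relation of the Aho–Corasick failure-link graph on the vertex set `Pref`: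
`q` is the longest proper suffix of `p` belonging to `Pref`. -/
def ACFLedge (Pref : Set (List β)) (p q : List β) : Prop :=
  p ∈ Pref ∧ q ∈ Pref ∧ p ≠ q ∧ q <:+ p ∧
    ∀ r ∈ Pref, r ≠ p → r <:+ p → r.length ≤ q.length

/-- The Run-Length measure `d_B(P) = #{i : BWT[i] ≠ BWT[i+1]}` (0-based, `i` ranging
over the first `|m| − 1` positions). -/
def dB [LinearOrder α] (m : List (WithBot α)) (SA : ℕ → ℕ) : ℕ :=
  ((List.range (m.length - 1)).filter
      (fun i => decide (bwtArr m SA i ≠ bwtArr m SA (i + 1)))).length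

/-- `P` is topologically planar: for every prefix `p` of the reverse of some string of
`P.S`, the indices `r` with `p` a prefix of `reverse(t_r)` form a set of consecutive
integers. -/
def TopPlanar [DecidableEq α] (P : OSS α) : Prop :=
  ∀ p : List α, (∃ s ∈ P.strs, p <+: s.reverse) →
    ∀ r₁ r₂ r₃ : ℕ, r₁ ≤ r₂ → r₂ ≤ r₃ → r₃ < P.strs.length →
      p <+: (P.strs.getD r₁ []).reverse → p <+: (P.strs.getD r₃ []).reverse →
      p <+: (P.strs.getD r₂ []).reverse

/-- `Letter[i]`: the first symbol of the suffix of rank `i`, i.e. `m[SA i]`. -/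
def letterArr (m : List (WithBot α)) (SA : ℕ → ℕ) (i : ℕ) : WithBot α :=
  m.getD (SA i) ⊥

/-- 0-based select: the position of the `(j+1)`-st occurrence of `c` in
`f 0, f 1, …, f (N−1)`. -/
def select0 [LinearOrder α] (f : ℕ → WithBot α) (N : ℕ) (c : WithBot α) (j : ℕ) : ℕ :=
  (((List.range N).filter (fun k => decide (f k = c)))).getD j 0

/-- The inverse Last-to-First mapping (0-based):
`RLF[i] = select_{Letter[i]}(BWT, i − C[Letter[i]])`. -/
def RLF [LinearOrder α] (m : List (WithBot α)) (SA : ℕ → ℕ) (i : ℕ) : ℕ :=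
  select0 (bwtArr m SA) m.length (letterArr m SA i)
    (i - Cfun m (letterArr m SA i))

/-- `d_A(T') = #{i : T'[i] ≠ T'[i+1]}`, the number of adjacent mismatches. -/
def dA [DecidableEq β] : List β → ℕ
  | a :: b :: t => (if a = b then 0 else 1) + dA (b :: t)
  | _ => 0

/-- `T'` is valid for the block decomposition `B` (an interval partition given by the
lengths of the blocks): `T'` splits into blocks of the same lengths as those of `B`,
with the same symbol set blockwise. -/
def ValidArr [DecidableEq β] (B : List (List β)) (T' : List β) : Prop :=
  ∃ B' : List (List β),
    List.Forall₂ (fun b b' => b.length = b'.length ∧ b.toFinset = b'.toFinset) B B' ∧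
    B'.flatten = T'

/-- `T'` is optimal for the block decomposition `B`: valid and of minimal `d_A`. -/
def OptimalArr [DecidableEq β] (B : List (List β)) (T' : List β) : Prop :=
  ValidArr B T' ∧ ∀ T'' : List β, ValidArr B T'' → dA T' ≤ dA T''



section AuxLemmas

lemma lcpLen_take [DecidableEq β] (a b : List β) :
    a.take (lcpLen a b) = b.take (lcpLen a b) := by
  induction a generalizing b with
  | nil => simp [lcpLen]
  | cons x s ih =>
    cases b with
    | nil => simp [lcpLen]
    | cons y t =>
      by_cases h : x = y
      · subst h; simp [lcpLen, ih]
      · simp [lcpLen, h]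

lemma le_lcpLen [DecidableEq β] {q a b : List β} (ha : q <+: a) (hb : q <+: b) :
    q.length ≤ lcpLen a b := by
  induction q generalizing a b with
  | nil => simp
  | cons x q ih =>
    obtain ⟨ta, rfl⟩ := ha
    obtain ⟨tb, rfl⟩ := hb
    simpa [lcpLen] using ih (q.prefix_append ta) (q.prefix_append tb)

lemma prefix_takeWhile' (p : β → Bool) {q l : List β} (h : q <+: l)
    (hq : ∀ x ∈ q, p x = true) : q <+: l.takeWhile p := by
  induction q generalizing l with
  | nil => simp
  | cons x q ih =>
    obtain ⟨t, rfl⟩ := h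
    rw [List.cons_append, List.takeWhile_cons, hq x (by simp)]
    exact List.cons_prefix_cons.mpr ⟨rfl, ih (q.prefix_append t) fun y hy => hq y (by simp [hy])⟩

lemma takeWhile_append_cons (p : β → Bool) {b : β} (x r : List β)
    (hx : ∀ a ∈ x, p a = true) (hb : p b = false) :
    (x ++ b :: r).takeWhile p = x := by
  induction x with
  | nil => simp [List.takeWhile_cons, hb]
  | cons a x ih =>
    rw [List.cons_append, List.takeWhile_cons, hx a (by simp)]
    simp [ih fun y hy => hx y (by simp [hy])]

lemma lex_strip [LinearOrder γ] (x : List γ) {a b : List γ}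
    (h : List.Lex (·<·) (x ++ a) (x ++ b)) : List.Lex (·<·) a b := by
  induction x with
  | nil => exact h
  | cons y x ih =>
    cases h with
    | cons h => exact ih h
    | rel h => exact absurd h (lt_irrefl y)

lemma lex_sandwich [LinearOrder γ] {q a b c : List γ}
    (hab : List.Lex (·<·) a b ∨ a = b) (hbc : List.Lex (·<·) b c ∨ b = c)
    (ha : q <+: a) (hc : q <+: c) : q <+: b := by
  induction q generalizing a b c with
  | nil => simp
  | cons x q ih =>
    rcases hab with hab | rfl
    · rcases hbc with hbc | rfl
      · obtain ⟨ta, rfl⟩ := ha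
        obtain ⟨tc, rfl⟩ := hc
        cases b with
        | nil => cases hab
        | cons y b' =>
          cases hab with
          | rel h1 =>
            cases hbc with
            | rel h2 => exact absurd (h1.trans h2) (lt_irrefl x)
            | cons h2 => exact absurd h1 (lt_irrefl x)
          | cons h1 =>
            cases hbc with
            | rel h2 => exact absurd h2 (lt_irrefl x)
            | cons h2 =>
              exact List.cons_prefix_cons.mpr ⟨rfl,
                ih (Or.inl h1) (Or.inl h2) (q.prefix_append ta) (q.prefix_append tc)⟩
      · exact hc
    · exact ha


lemma sym_ne_bot (a : α) : sym a ≠ ⊥ := by simp [sym]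

/-- the block `⊥ :: s` -/
def gblk (s : List α) : List (WithBot α) := ⊥ :: s.map sym

lemma bot_cons_flatten (L : List (List α)) :
    (⊥ :: (L.map (fun s => s.map sym ++ [⊥])).flatten : List (WithBot α)) =
    (L.map gblk).flatten ++ [⊥] := by
  induction L with
  | nil => simp
  | cons s L ih =>
    simp only [List.map_cons, List.flatten_cons, gblk, List.append_assoc,
      List.singleton_append, List.cons_append]
    rw [← ih]
    simp

lemma flatten_ends_bot (L : List (List α)) (hL : L ≠ []) :
    ∃ m', (L.map (fun s => s.map sym ++ [⊥])).flatten = m' ++ [⊥] := by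
  induction L with
  | nil => exact absurd rfl hL
  | cons s L ih =>
    cases L with
    | nil => exact ⟨s.map sym, by simp⟩
    | cons t L =>
      obtain ⟨m', hm'⟩ := ih (by simp)
      exact ⟨(s.map sym ++ [⊥]) ++ m', by
        rw [List.map_cons, List.flatten_cons, hm']
        simp⟩

lemma gblk_length_pos (s : List α) : 0 < (gblk s).length := by simp [gblk]

lemma D_head (L : List (List α)) :
    ∃ t, ((L.map gblk).flatten ++ [⊥] : List (WithBot α)) = ⊥ :: t := by
  cases L with
  | nil => exact ⟨[], rfl⟩
  | cons s L => exact ⟨s.map sym ++ ((L.map gblk).flatten ++ [⊥]), by simp [gblk]⟩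

lemma gblk_getElem_ne_bot (s : List α) (j : ℕ) (hj : j < (gblk s).length) (h0 : 0 < j) :
    (gblk s)[j] ≠ ⊥ := by
  match j, h0 with
  | j+1, _ =>
    simp only [gblk, List.getElem_cons_succ, List.getElem_map]
    exact sym_ne_bot _

lemma infix_iff_exists_drop {β : Type*} {l₁ l₂ : List β} :
    l₁ <:+: l₂ ↔ ∃ q, l₁ <+: l₂.drop q := by
  constructor
  · rintro ⟨s, t, rfl⟩
    exact ⟨s.length, by rw [List.append_assoc, List.drop_left]; exact List.prefix_append _ _⟩
  · rintro ⟨q, h⟩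
    exact h.isInfix.trans (l₂.drop_suffix q).isInfix

lemma infix_flatten_imp {c : WithBot α} {w : List (WithBot α)} (hw : ∀ x ∈ w, x ≠ ⊥)
    (L : List (List α))
    (h : (c :: (w ++ [⊥])) <:+: ((L.map gblk).flatten ++ [⊥])) :
    ∃ s ∈ L, (c :: w) <:+ gblk s := by
  induction L with
  | nil =>
    obtain ⟨pre, post, heq⟩ := h
    apply_fun List.length at heq
    simp at heq
    omega
  | cons s L ih =>
    obtain ⟨q, hpre⟩ := infix_iff_exists_drop.mp h
    set D' : List (WithBot α) := (L.map gblk).flatten ++ [⊥] with hD'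
    have hDeq : ((s :: L).map gblk).flatten ++ [⊥] = gblk s ++ D' := by
      simp [hD']
    rw [hDeq] at hpre
    set G := (gblk s).length with hG
    by_cases hqG : G ≤ q
    · -- occurrence inside D'
      have hdrop : (gblk s ++ D').drop ((gblk s).length + (q - G)) = D'.drop (q - G) := by simp
      rw [show (gblk s).length + (q - G) = q by omega] at hdrop
      rw [hdrop] at hpre
      obtain ⟨s', hs', h'⟩ := ih (infix_iff_exists_drop.mpr ⟨q - G, hpre⟩)
      exact ⟨s', List.mem_cons_of_mem _ hs', h'⟩
    · push_neg at hqG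
      have hlenD : q + (w.length + 2) ≤ (gblk s ++ D').length := by
        have := hpre.length_le
        simp at this ⊢
        omega
      have hD'len : 0 < D'.length := by simp [hD']
      have hlenD' : q + (w.length + 2) ≤ G + D'.length := by
        simpa [hG] using hlenD
      have hget : ∀ i (hi : i < w.length + 2),
          (c :: (w ++ [⊥]))[i]'(by simp; omega) =
            (gblk s ++ D')[q + i]'(by simp [← hG]; omega) := by
        intro i hi
        have h1 := hpre.getElem (i := i) (hi := by simp; omega)
        rw [h1]
        rw [List.getElem_drop]
      have hpat_last : (c :: (w ++ [⊥]))[w.length + 1]'(by simp) = (⊥ : WithBot α) := by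
        simp
      obtain ⟨t, ht⟩ := D_head L
      have hD'0 : D'[0]'(hD'len) = (⊥ : WithBot α) := by
        simp [hD', ht]
      -- position of the final ⊥ of the pattern must be G
      have hbotpos : q + (w.length + 1) = G := by
        by_contra hne
        rcases Nat.lt_or_ge (q + (w.length + 1)) G with hlt | hge
        · have h1 := hget (w.length + 1) (by omega)
          rw [hpat_last, List.getElem_append_left (by omega)] at h1
          exact gblk_getElem_ne_bot s _ (by omega) (by omega) h1.symm
        · have hGq : G - q < w.length + 1 := by omega
          have hGq0 : 0 < G - q := by omega
          have h1 := hget (G - q) (by omega)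
          obtain ⟨j, hj⟩ : ∃ j, G - q = j + 1 := ⟨G - q - 1, by omega⟩
          have h2 : (c :: (w ++ [⊥]))[G - q]'(by simp; omega) = w[G - q - 1]'(by omega) := by
            simp only [hj]
            rw [List.getElem_cons_succ, List.getElem_append_left (by omega)]
            simp
          have h3 : (gblk s ++ D')[q + (G - q)]'(by simp [← hG]; omega) = D'[0]'(hD'len) := by
            rw [List.getElem_append_right (by omega)]
            congr 1
            omega
          have := hw (w[G - q - 1]'(by omega)) (List.getElem_mem _)
          rw [← h2, h1, h3, hD'0] at this
          exact this rfl
      -- now c :: w = (gblk s).drop q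
      have hcw : c :: w = (gblk s).drop q := by
        apply List.ext_getElem
        · simp
          omega
        · intro i h1 h2
          have hi : i < w.length + 1 := by simpa using h1
          have hg := hget i (by omega)
          have h5 : (c :: (w ++ [⊥]))[i]'(by simp; omega) = (c :: w)[i]'(by simp; omega) := by
            rcases i with _ | j
            · rfl
            · rw [List.getElem_cons_succ, List.getElem_cons_succ,
                List.getElem_append_left (by omega)]
          rw [← h5, hg, List.getElem_append_left (by omega), List.getElem_drop]
      exact ⟨s, List.mem_cons_self (a := s) (l := L), hcw ▸ List.drop_suffix q (gblk s)⟩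

lemma suffix_imp_infix {c : WithBot α} {w : List (WithBot α)} (L : List (List α))
    {s : List α} (hs : s ∈ L) (h : (c :: w) <:+ gblk s) :
    (c :: (w ++ [⊥])) <:+: ((L.map gblk).flatten ++ [⊥]) := by
  obtain ⟨L₁, L₂, rfl⟩ := List.append_of_mem hs
  obtain ⟨pre, hpre⟩ := h
  obtain ⟨t, ht⟩ := D_head L₂
  have key : gblk s ++ ((L₂.map gblk).flatten ++ [⊥]) = pre ++ ((c :: (w ++ [⊥])) ++ t) := by
    rw [ht, ← hpre]
    simp
  refine ⟨(L₁.map gblk).flatten ++ pre, t, ?_⟩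
  simp only [List.map_append, List.map_cons, List.flatten_append, List.flatten_cons,
    List.append_assoc]
  rw [key]


section Part3
variable [LinearOrder α]

lemma occ_iff_pos (m : List (WithBot α)) {c : WithBot α} {w : List (WithBot α)} :
    ((c :: (w ++ [⊥])) <:+: (⊥ :: m)) ↔
    ∃ p < m.length, (w ++ [⊥]) <+: m.drop p ∧
      (if p = 0 then (⊥ : WithBot α) else m.getD (p - 1) ⊥) = c := by
  constructor
  · intro h
    obtain ⟨q, hpre⟩ := infix_iff_exists_drop.mp h
    have hlen := hpre.length_le
    have hdl : ((⊥ :: m).drop q).length = m.length + 1 - q := by simp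
    rw [hdl] at hlen
    simp only [List.length_cons, List.length_append, List.length_singleton] at hlen
    have hql : q + (w.length + 2) ≤ m.length + 1 := by omega
    cases q with
    | zero =>
      rw [List.drop_zero] at hpre
      obtain ⟨hc, hpre'⟩ := List.cons_prefix_cons.mp hpre
      exact ⟨0, by omega, by simpa using hpre', by simp [hc]⟩
    | succ j =>
      have hj : j < m.length := by omega
      have hdq : (⊥ :: m).drop (j + 1) = m.drop j := rfl
      rw [hdq, ← List.getElem_cons_drop (as := m) (i := j) hj] at hpre
      obtain ⟨hc, hpre'⟩ := List.cons_prefix_cons.mp hpre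
      refine ⟨j + 1, by omega, hpre', ?_⟩
      simp only [Nat.add_sub_cancel, if_neg (Nat.succ_ne_zero j)]
      rw [List.getD_eq_getElem _ _ hj, ← hc]
  · rintro ⟨p, hp, hpre, hc⟩
    apply infix_iff_exists_drop.mpr
    cases p with
    | zero =>
      refine ⟨0, ?_⟩
      rw [List.drop_zero]
      apply List.cons_prefix_cons.mpr
      have hc' : (⊥ : WithBot α) = c := by simpa using hc
      exact ⟨hc'.symm, by simpa using hpre⟩
    | succ j =>
      refine ⟨j + 1, ?_⟩
      have hj : j < m.length := by omega
      have hdq : (⊥ :: m).drop (j + 1) = m.drop j := rfl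
      rw [hdq, ← List.getElem_cons_drop (as := m) (i := j) hj]
      apply List.cons_prefix_cons.mpr
      refine ⟨?_, hpre⟩
      have := hc
      simp only [if_neg (Nat.succ_ne_zero j), Nat.add_sub_cancel] at this
      rw [List.getD_eq_getElem _ _ hj] at this
      exact this.symm

lemma suffix_decomp {m : List (WithBot α)} (hm : ∃ m', m = m' ++ [⊥]) {p : ℕ}
    (hp : p < m.length) :
    ∃ r, m.drop p = (m.drop p).takeWhile (fun c => decide (c ≠ ⊥)) ++ ⊥ :: r := by
  have hbot : (⊥ : WithBot α) ∈ m.drop p := by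
    obtain ⟨m', rfl⟩ := hm
    have hple : p ≤ m'.length := by
      simp only [List.length_append, List.length_singleton] at hp
      omega
    rw [List.drop_append_of_le_length hple]
    simp
  set l := m.drop p with hl
  have hd : l.dropWhile (fun c => decide (c ≠ ⊥)) ≠ [] := by
    intro he
    have := List.dropWhile_eq_nil_iff.mp he ⊥ hbot
    simp at this
  have hhead : (l.dropWhile (fun c => decide (c ≠ ⊥))).head hd = ⊥ := by
    simpa using List.head_dropWhile_not (fun c => decide (c ≠ ⊥)) (l := l) hd
  obtain ⟨a, t2, hdw⟩ := List.exists_cons_of_ne_nil hd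
  have ha : a = ⊥ := by
    simp only [hdw, List.head_cons] at hhead
    exact hhead
  refine ⟨t2, ?_⟩
  conv_lhs => rw [← List.takeWhile_append_dropWhile
    (p := fun c => decide (c ≠ ⊥)) (l := l)]
  rw [hdw, ha]

lemma mP_unfold (P : OSS α) :
    mP P = (P.strs.map (fun s => s.map sym ++ [⊥])).flatten := rfl

end Part3

end AuxLemmas

/-- The set of symbols `{BWT(P)[k] : k ∈ u}` equals the set of symbols
`c` such that `Dec_Pre[u] ++ [c]` is a prefix of some `reverse(s) ++ [$]`, `s ∈ P.S`. -/
theorem bwt_symbols_on_interval [Fintype α] [LinearOrder α] (P : OSS α)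
    (SA : ℕ → ℕ) (hSA : IsSuffixArray (mP P) SA)
    (u : ℕ × ℕ) (hu : u ∈ DecompBWT (mP P) SA) :
    { c : WithBot α | ∃ k, u.1 ≤ k ∧ k ≤ u.2 ∧ bwtArr (mP P) SA k = c } =
    { c : WithBot α | ∃ s ∈ P.strs,
        (decPre (mP P) SA u ++ [c]) <+: (s.reverse.map sym ++ [⊥]) } := by
  obtain ⟨hbij, hsort⟩ := hSA
  obtain ⟨hu12, hu2N, hint, hbl, hbr⟩ := hu
  set m := mP P with hm_def
  have hm : ∃ m', m = m' ++ [⊥] := by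
    rw [hm_def, mP_unfold]
    exact flatten_ends_bot P.strs P.strs_ne
  have hmap : ∀ k, k < m.length → SA k < m.length :=
    fun k hk => Set.mem_Iio.mp (hbij.1 (Set.mem_Iio.mpr hk))
  have hu1N : u.1 < m.length := lt_of_le_of_lt hu12 hu2N
  have hdec : ∀ k, k < m.length → ∃ r, m.drop (SA k) =
      (m.drop (SA k)).takeWhile (fun c => decide (c ≠ ⊥)) ++ ⊥ :: r :=
    fun k hk => suffix_decomp hm (hmap k hk)
  -- constancy of the ⊥-free prefix on the interval
  have hWconst : ∀ k, u.1 ≤ k → k ≤ u.2 →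
      (m.drop (SA k)).takeWhile (fun c => decide (c ≠ ⊥)) =
      (m.drop (SA u.1)).takeWhile (fun c => decide (c ≠ ⊥)) := by
    intro k hk1 hk2
    induction k, hk1 using Nat.le_induction with
    | base => rfl
    | succ k hk ih =>
      have hk2' : k ≤ u.2 := by omega
      have ihW := ih hk2'
      have hkN : k + 1 < m.length := by omega
      have hlcp := hint (k + 1) (by omega) hk2
      rw [lcpP, if_neg (Nat.succ_ne_zero k)] at hlcp
      have hle : lrs m SA (k + 1) ≤
          lcpLen (m.drop (SA (k + 1 - 1))) (m.drop (SA (k + 1))) :=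
        min_eq_right_iff.mp hlcp
      rw [Nat.add_sub_cancel] at hle
      set Wk1 := (m.drop (SA (k + 1))).takeWhile (fun c => decide (c ≠ ⊥)) with hWk1
      set Wk := (m.drop (SA k)).takeWhile (fun c => decide (c ≠ ⊥)) with hWk
      have hlrs : lrs m SA (k + 1) = Wk1.length := rfl
      rw [hlrs] at hle
      have htake : Wk1 = (m.drop (SA (k + 1))).take Wk1.length :=
        List.prefix_iff_eq_take.mp (List.takeWhile_prefix _)
      have htake2 : (m.drop (SA (k + 1))).take Wk1.length
          = (m.drop (SA k)).take Wk1.length := by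
        have h1 := lcpLen_take (m.drop (SA k)) (m.drop (SA (k + 1)))
        calc (m.drop (SA (k + 1))).take Wk1.length
            = ((m.drop (SA (k + 1))).take
                (lcpLen (m.drop (SA k)) (m.drop (SA (k + 1))))).take Wk1.length := by
              rw [List.take_take, min_eq_left hle]
          _ = ((m.drop (SA k)).take
                (lcpLen (m.drop (SA k)) (m.drop (SA (k + 1))))).take Wk1.length := by
              rw [h1]
          _ = (m.drop (SA k)).take Wk1.length := by
              rw [List.take_take, min_eq_left hle]
      have hWpre : Wk1 <+: Wk := by
        apply prefix_takeWhile'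
        · rw [htake, htake2]
          exact List.take_prefix _ _
        · intro x hx
          rw [hWk1] at hx
          simpa using List.mem_takeWhile_imp hx
      have hlen_ge : Wk.length ≤ Wk1.length := by
        by_contra hlt
        push_neg at hlt
        obtain ⟨t, ht⟩ := hWpre
        have htne : t ≠ [] := by
          intro h0
          rw [h0, List.append_nil] at ht
          rw [ht] at hlt
          omega
        obtain ⟨d, t', rfl⟩ := List.exists_cons_of_ne_nil htne
        have hd_ne : d ≠ ⊥ := by
          have hdm : d ∈ Wk := by rw [← ht]; simp
          rw [hWk] at hdm
          simpa using List.mem_takeWhile_imp hdm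
        obtain ⟨r, hr⟩ := hdec k (by omega)
        obtain ⟨r', hr'⟩ := hdec (k + 1) hkN
        rw [← hWk] at hr
        rw [← hWk1] at hr'
        have hlex := hsort k (k + 1) (by omega) hkN
        rw [hr, hr', ← ht, List.append_assoc, List.cons_append] at hlex
        have hlex' := lex_strip Wk1 hlex
        cases hlex' with
        | rel h => exact absurd h not_lt_bot
        | cons h => exact hd_ne rfl
      exact (hWpre.eq_of_length_le hlen_ge).trans ihW
  have hWpre_bot : ∀ k, u.1 ≤ k → k ≤ u.2 →
      ((m.drop (SA u.1)).takeWhile (fun c => decide (c ≠ ⊥)) ++ [⊥]) <+: m.drop (SA k) := by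
    intro k h1 h2
    obtain ⟨r, hr⟩ := hdec k (by omega)
    refine ⟨r, ?_⟩
    rw [List.append_assoc, List.singleton_append, ← hWconst k h1 h2, ← hr]
  have hq_u1 : ((m.drop (SA u.1)).takeWhile (fun c => decide (c ≠ ⊥)) ++ [⊥])
      <+: m.drop (SA u.1) := hWpre_bot u.1 le_rfl hu12
  have hrange : ∀ k, k < m.length →
      ((m.drop (SA u.1)).takeWhile (fun c => decide (c ≠ ⊥)) ++ [⊥]) <+: m.drop (SA k) →
      u.1 ≤ k ∧ k ≤ u.2 := by
    intro k hkN hk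
    constructor
    · by_contra hlt
      push_neg at hlt
      have hu1pos : 0 < u.1 := by omega
      have hsand : ((m.drop (SA u.1)).takeWhile (fun c => decide (c ≠ ⊥)) ++ [⊥])
          <+: m.drop (SA (u.1 - 1)) := by
        refine lex_sandwich (a := m.drop (SA k)) (c := m.drop (SA u.1)) ?_ ?_ hk hq_u1
        · rcases Nat.lt_or_ge k (u.1 - 1) with h | h
          · exact Or.inl (hsort k (u.1 - 1) h (by omega))
          · have hke : k = u.1 - 1 := by omega
            exact Or.inr (by rw [hke])
        · exact Or.inl (hsort (u.1 - 1) u.1 (by omega) hu1N)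
      have hlcp_ge := le_lcpLen hsand hq_u1
      have hcontra : lcpP m SA u.1 = lrs m SA u.1 := by
        rw [lcpP, if_neg (by omega)]
        apply min_eq_right
        have hlrs1 : lrs m SA u.1 =
            ((m.drop (SA u.1)).takeWhile (fun c => decide (c ≠ ⊥))).length := rfl
        rw [hlrs1]
        simp only [List.length_append, List.length_singleton] at hlcp_ge
        omega
      rcases hbl with h0 | hne
      · omega
      · exact hne hcontra
    · by_contra hlt
      push_neg at hlt
      rcases hbr with hNend | hne
      · omega
      · have hu21N : u.2 + 1 < m.length := by omega
        have hq_u2 := hWpre_bot u.2 hu12 le_rfl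
        have hsand : ((m.drop (SA u.1)).takeWhile (fun c => decide (c ≠ ⊥)) ++ [⊥])
            <+: m.drop (SA (u.2 + 1)) := by
          refine lex_sandwich (a := m.drop (SA u.2)) (c := m.drop (SA k)) ?_ ?_ hq_u2 hk
          · exact Or.inl (hsort u.2 (u.2 + 1) (by omega) hu21N)
          · rcases Nat.lt_or_ge (u.2 + 1) k with h | h
            · exact Or.inl (hsort (u.2 + 1) k h hkN)
            · have hke : u.2 + 1 = k := by omega
              exact Or.inr (by rw [hke])
        obtain ⟨t, ht⟩ := hsand
        rw [List.append_assoc, List.singleton_append] at ht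
        have hlrs2 : lrs m SA (u.2 + 1) =
            ((m.drop (SA u.1)).takeWhile (fun c => decide (c ≠ ⊥))).length := by
          rw [lrs, ← ht, takeWhile_append_cons]
          · intro a ha
            simpa using List.mem_takeWhile_imp ha
          · simp
        have hsand' : ((m.drop (SA u.1)).takeWhile (fun c => decide (c ≠ ⊥)) ++ [⊥])
            <+: m.drop (SA (u.2 + 1)) := ⟨t, by rw [List.append_assoc, List.singleton_append, ht]⟩
        have hlcp_ge := le_lcpLen hq_u2 hsand'
        have hcontra : lcpP m SA (u.2 + 1) = lrs m SA (u.2 + 1) := by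
          rw [lcpP, if_neg (Nat.succ_ne_zero _), Nat.add_sub_cancel]
          apply min_eq_right
          rw [hlrs2]
          simp only [List.length_append, List.length_singleton] at hlcp_ge
          omega
        exact hne hcontra
  -- assemble
  have hW_take : (m.drop (SA u.1)).take (lrs m SA u.1) =
      (m.drop (SA u.1)).takeWhile (fun c => decide (c ≠ ⊥)) :=
    (List.prefix_iff_eq_take.mp (List.takeWhile_prefix _)).symm
  have hdecPre : decPre m SA u =
      ((m.drop (SA u.1)).takeWhile (fun c => decide (c ≠ ⊥))).reverse := by
    rw [decPre, hW_take]
  have hwbot : ∀ x ∈ (m.drop (SA u.1)).takeWhile (fun c => decide (c ≠ ⊥)), x ≠ ⊥ :=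
    fun x hx => by simpa using List.mem_takeWhile_imp hx
  have hocc : (⊥ :: m : List (WithBot α)) = (P.strs.map gblk).flatten ++ [⊥] := by
    rw [hm_def, mP_unfold]
    exact bot_cons_flatten P.strs
  have hgrev : ∀ s : List α, s.reverse.map sym ++ [⊥] = (gblk s).reverse := by
    intro s
    simp [gblk, List.map_reverse]
  ext c
  simp only [Set.mem_setOf_eq]
  constructor
  · rintro ⟨k, hk1, hk2, rfl⟩
    have hkN : k < m.length := by omega
    have hpN : SA k < m.length := hmap k hkN
    have hinf : (bwtArr m SA k ::
        ((m.drop (SA u.1)).takeWhile (fun c => decide (c ≠ ⊥)) ++ [⊥])) <:+: (⊥ :: m) :=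
      (occ_iff_pos m).mpr ⟨SA k, hpN, hWpre_bot k hk1 hk2, rfl⟩
    rw [hocc] at hinf
    obtain ⟨s, hs, hsuf⟩ := infix_flatten_imp hwbot P.strs hinf
    refine ⟨s, hs, ?_⟩
    rw [hdecPre, hgrev s, ← List.reverse_cons]
    exact List.reverse_prefix.mpr hsuf
  · rintro ⟨s, hs, hpre⟩
    have h1 : (c :: (m.drop (SA u.1)).takeWhile (fun c => decide (c ≠ ⊥))) <:+ gblk s := by
      apply List.reverse_prefix.mp
      rw [List.reverse_cons]
      rw [hdecPre] at hpre
      rw [hgrev s] at hpre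
      exact hpre
    have hinf : (c :: ((m.drop (SA u.1)).takeWhile (fun c => decide (c ≠ ⊥)) ++ [⊥]))
        <:+: (⊥ :: m) := by
      rw [hocc]
      exact suffix_imp_infix P.strs hs h1
    obtain ⟨p, hpN, hp1, hp2⟩ := (occ_iff_pos m).mp hinf
    obtain ⟨k, hkN, hSAk⟩ := hbij.2.2 (Set.mem_Iio.mpr hpN)
    obtain ⟨hk1, hk2⟩ := hrange k (Set.mem_Iio.mp hkN) (by rw [hSAk]; exact hp1)
    refine ⟨k, hk1, hk2, ?_⟩
    show (if SA k = 0 then (⊥ : WithBot α) else m.getD (SA k - 1) ⊥) = c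
    rw [hSAk]
    exact hp2


end BwtXbw
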